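/- Let (X,T) be a topological dynamical system with an invariant Borel probability measure μ, and let U be a Borel set with a = μ(U) > 0. Then there exists n = n(a) ∈ ℕ such that for every finite IP-set FS({p_i}_{i=1}^n) generated by n positive integers, there exists q ∈ FS({p_i}_{i=1}^n) with μ(U ∩ T^{−q}U) ≥ a²/2. -/

import Mathlib

open MeasureTheory

private lemma bonferroni {X : Type*} [MeasurableSpace X] (μ : Measure X)
    (A : ℕ → Set X) (hA : ∀ k, MeasurableSet (A k)) (m : ℕ) :
    ∑ k ∈ Finset.range m, μ (A k) ≤
      μ (⋃ k ∈ Finset.range m, A k) +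
        ∑ k ∈ Finset.range m, ∑ j ∈ Finset.range k, μ (A j ∩ A k) := by
  induction m with
  | zero => simp
  | succ m ih =>
    have hun : (⋃ k ∈ Finset.range (m + 1), A k) =
        (⋃ k ∈ Finset.range m, A k) ∪ A m := by
      simp [Finset.range_add_one, Set.biUnion_insert, Set.union_comm]
    have hint : (⋃ k ∈ Finset.range m, A k) ∩ A m =
        ⋃ j ∈ Finset.range m, (A j ∩ A m) := by
      rw [Set.iUnion₂_inter]
    have key : μ (⋃ k ∈ Finset.range m, A k) + μ (A m) =
        μ (⋃ k ∈ Finset.range (m + 1), A k) +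
          μ ((⋃ k ∈ Finset.range m, A k) ∩ A m) := by
      rw [hun, measure_union_add_inter _ (hA m)]
    have hle : μ ((⋃ k ∈ Finset.range m, A k) ∩ A m) ≤
        ∑ j ∈ Finset.range m, μ (A j ∩ A m) := by
      rw [hint]; exact measure_biUnion_finset_le _ _
    calc ∑ k ∈ Finset.range (m + 1), μ (A k)
        = ∑ k ∈ Finset.range m, μ (A k) + μ (A m) := Finset.sum_range_succ _ _
      _ ≤ (μ (⋃ k ∈ Finset.range m, A k) +
            ∑ k ∈ Finset.range m, ∑ j ∈ Finset.range k, μ (A j ∩ A k)) + μ (A m) :=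
          add_le_add_left ih _
      _ = (μ (⋃ k ∈ Finset.range m, A k) + μ (A m)) +
            ∑ k ∈ Finset.range m, ∑ j ∈ Finset.range k, μ (A j ∩ A k) := by ring
      _ = (μ (⋃ k ∈ Finset.range (m + 1), A k) +
            μ ((⋃ k ∈ Finset.range m, A k) ∩ A m)) +
            ∑ k ∈ Finset.range m, ∑ j ∈ Finset.range k, μ (A j ∩ A k) := by rw [key]
      _ ≤ (μ (⋃ k ∈ Finset.range (m + 1), A k) +
            ∑ j ∈ Finset.range m, μ (A j ∩ A m)) +
            ∑ k ∈ Finset.range m, ∑ j ∈ Finset.range k, μ (A j ∩ A k) :=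
          add_le_add (add_le_add le_rfl hle) le_rfl
      _ = μ (⋃ k ∈ Finset.range (m + 1), A k) +
            ∑ k ∈ Finset.range (m + 1), ∑ j ∈ Finset.range k, μ (A j ∩ A k) := by
          rw [Finset.sum_range_succ]; ring

/-- Let `(X,T)` be a t.d.s. with invariant Borel probability measure `μ` and `U` a Borel
set with `μ U = a > 0`. There is `n = n(a)` such that for every finite IP-set generated by
`n` positive integers, some element `q` of it satisfies `μ (U ∩ T⁻¹^[q] U) ≥ a²/2`. -/
theorem finite_ip_return {X : Type*} [MetricSpace X] [CompactSpace X]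
    [MeasurableSpace X] [BorelSpace X]
    (T : X → X) (hT : Continuous T) (hTs : Function.Surjective T)
    (μ : Measure X) [IsProbabilityMeasure μ]
    (hinv : ∀ A : Set X, MeasurableSet A → μ (T ⁻¹' A) = μ A)
    (U : Set X) (hU : MeasurableSet U) (a : ℝ) (ha : 0 < a) (haU : (μ U).toReal = a) :
    ∃ n : ℕ, ∀ p : Fin n → ℕ, (∀ i, 0 < p i) →
      ∃ α : Finset (Fin n), α.Nonempty ∧
        a ^ 2 / 2 ≤ (μ (U ∩ (fun x => T^[∑ i ∈ α, p i] x) ⁻¹' U)).toReal := by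
  -- iterated invariance
  have hTm : Measurable T := hT.measurable
  have hinv_iter : ∀ (m : ℕ) (B : Set X), MeasurableSet B → μ ((T^[m]) ⁻¹' B) = μ B := by
    intro m
    induction m with
    | zero => intro B _; simp
    | succ m ih =>
      intro B hB
      rw [Function.iterate_succ, Set.preimage_comp]
      rw [hinv _ ((hTm.iterate m) hB)]
      exact ih B hB
  have ha1 : a ≤ 1 := by
    rw [← haU]
    exact ENNReal.toReal_le_of_le_ofReal zero_le_one (by simpa using prob_le_one (μ := μ) (s := U))
  set n : ℕ := ⌈2 / a⌉₊ with hn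
  have hna : (2 : ℝ) / a ≤ n := Nat.le_ceil _
  have hna' : (n : ℝ) < 2 / a + 1 :=
    Nat.ceil_lt_add_one (by positivity)
  refine ⟨n, ?_⟩
  intro p hp
  by_contra hcon
  push_neg at hcon
  -- set up the sets
  set q : ℕ → ℕ := fun i => if h : i < n then p ⟨i, h⟩ else 0 with hq
  set s : ℕ → ℕ := fun k => ∑ i ∈ Finset.range k, q i with hs
  set A : ℕ → Set X := fun k => (T^[s k]) ⁻¹' U with hA
  have hAmeas : ∀ k, MeasurableSet (A k) := fun k => (hTm.iterate (s k)) hU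
  have hAmu : ∀ k, μ (A k) = μ U := fun k => hinv_iter (s k) U hU
  -- pairwise intersections are small
  have hpair : ∀ j k : ℕ, j < k → k ≤ n → (μ (A j ∩ A k)).toReal < a ^ 2 / 2 := by
    intro j k hjk hkn
    set d : ℕ := ∑ i ∈ Finset.Ico j k, q i with hd
    have hsd : s k = d + s j := by
      have h0 : s j + d = s k := by
        simp only [hs, hd]
        exact Finset.sum_range_add_sum_Ico _ hjk.le
      omega
    have hAk : A k = (T^[s j]) ⁻¹' ((T^[d]) ⁻¹' U) := by
      rw [hA]
      simp only
      rw [hsd, Function.iterate_add, Set.preimage_comp]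
    have hAjk : A j ∩ A k = (T^[s j]) ⁻¹' (U ∩ (T^[d]) ⁻¹' U) := by
      rw [hAk, hA]; simp [Set.preimage_inter]
    have hmeas2 : MeasurableSet (U ∩ (T^[d]) ⁻¹' U) := hU.inter ((hTm.iterate d) hU)
    have hμeq : μ (A j ∩ A k) = μ (U ∩ (T^[d]) ⁻¹' U) := by
      rw [hAjk]; exact hinv_iter _ _ hmeas2
    -- build the Finset α
    have hlt : ∀ m ∈ Finset.Ico j k, m < n := fun m hm =>
      lt_of_lt_of_le (Finset.mem_Ico.mp hm).2 hkn
    set α : Finset (Fin n) := (Finset.Ico j k).attachFin hlt with hα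
    have hαne : α.Nonempty := by
      refine ⟨⟨j, lt_of_lt_of_le hjk hkn⟩, ?_⟩
      rw [hα, Finset.mem_attachFin]
      exact Finset.mem_Ico.mpr ⟨le_refl j, hjk⟩
    have hαsum : ∑ i ∈ α, p i = d := by
      rw [hd, hα]
      refine Finset.sum_bij' (fun (x : Fin n) (_ : x ∈ (Finset.Ico j k).attachFin hlt) => (x : ℕ))
        (fun m hm => (⟨m, hlt m hm⟩ : Fin n)) ?_ ?_ ?_ ?_ ?_
      · intro x hx; rwa [Finset.mem_attachFin] at hx
      · intro m hm; rw [Finset.mem_attachFin]; exact hm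
      · intro x hx; rfl
      · intro m hm; rfl
      · intro x hx
        have hx' : (x : ℕ) < n := x.2
        simp [hq, hx']
    have := hcon α hαne
    rw [hαsum] at this
    rw [hμeq]
    exact this
  -- Bonferroni
  have hbon := bonferroni μ A hAmeas (n + 1)
  -- finiteness facts
  have hfin1 : ∀ k ∈ Finset.range (n + 1), μ (A k) ≠ ⊤ := fun k _ => measure_ne_top μ _
  have hfin2 : ∀ k ∈ Finset.range (n + 1), (∑ j ∈ Finset.range k, μ (A j ∩ A k)) ≠ ⊤ := by
    intro k _
    exact (ENNReal.sum_lt_top.mpr fun j _ => measure_lt_top μ _).ne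
  have hRHSfin : μ (⋃ k ∈ Finset.range (n + 1), A k) +
      ∑ k ∈ Finset.range (n + 1), ∑ j ∈ Finset.range k, μ (A j ∩ A k) ≠ ⊤ := by
    refine ENNReal.add_ne_top.mpr ⟨measure_ne_top μ _, ?_⟩
    exact (ENNReal.sum_lt_top.mpr fun k hk => (hfin2 k hk).lt_top).ne
  have hreal := ENNReal.toReal_mono hRHSfin hbon
  rw [ENNReal.toReal_add (measure_ne_top μ _)
    (ENNReal.sum_lt_top.mpr fun k hk => (hfin2 k hk).lt_top).ne] at hreal
  rw [ENNReal.toReal_sum hfin1, ENNReal.toReal_sum hfin2] at hreal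
  have hconv : ∀ k ∈ Finset.range (n + 1),
      (∑ j ∈ Finset.range k, μ (A j ∩ A k)).toReal =
        ∑ j ∈ Finset.range k, (μ (A j ∩ A k)).toReal :=
    fun k _ => ENNReal.toReal_sum fun j _ => measure_ne_top μ _
  rw [Finset.sum_congr rfl hconv] at hreal
  -- LHS value
  have hLHS : ∑ k ∈ Finset.range (n + 1), (μ (A k)).toReal = (n + 1) * a := by
    have : ∀ k ∈ Finset.range (n + 1), (μ (A k)).toReal = a := by
      intro k _; rw [hAmu k, haU]
    rw [Finset.sum_congr rfl this, Finset.sum_const, Finset.card_range, nsmul_eq_mul]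
    push_cast; ring
  rw [hLHS] at hreal
  -- union measure ≤ 1
  have hUn : (μ (⋃ k ∈ Finset.range (n + 1), A k)).toReal ≤ 1 := by
    have h1 : μ (⋃ k ∈ Finset.range (n + 1), A k) ≤ 1 := prob_le_one
    calc (μ (⋃ k ∈ Finset.range (n + 1), A k)).toReal
        ≤ (1 : ENNReal).toReal := ENNReal.toReal_mono (by norm_num) h1
      _ = 1 := by simp
  -- pairs sum bound
  have hpairsum : ∑ k ∈ Finset.range (n + 1), ∑ j ∈ Finset.range k,
      (ENNReal.toReal (μ (A j ∩ A k))) ≤ ((n : ℝ) * (n + 1) / 2) * (a ^ 2 / 2) := by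
    have step1 : ∀ k ∈ Finset.range (n + 1),
        ∑ j ∈ Finset.range k, (μ (A j ∩ A k)).toReal ≤ (k : ℝ) * (a ^ 2 / 2) := by
      intro k hk
      rw [Finset.mem_range] at hk
      calc ∑ j ∈ Finset.range k, (μ (A j ∩ A k)).toReal
          ≤ ∑ _j ∈ Finset.range k, (a ^ 2 / 2) := by
            refine Finset.sum_le_sum fun j hj => ?_
            rw [Finset.mem_range] at hj
            exact (hpair j k hj (Nat.lt_succ_iff.mp hk)).le
        _ = (k : ℝ) * (a ^ 2 / 2) := by rw [Finset.sum_const, Finset.card_range, nsmul_eq_mul]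
    calc ∑ k ∈ Finset.range (n + 1), ∑ j ∈ Finset.range k, (μ (A j ∩ A k)).toReal
        ≤ ∑ k ∈ Finset.range (n + 1), (k : ℝ) * (a ^ 2 / 2) := Finset.sum_le_sum step1
      _ = (∑ k ∈ Finset.range (n + 1), (k : ℝ)) * (a ^ 2 / 2) := by
          rw [← Finset.sum_mul]
      _ = ((n : ℝ) * (n + 1) / 2) * (a ^ 2 / 2) := by
          have h2 : (∑ i ∈ Finset.range (n + 1), i) * 2 = (n + 1) * n :=
            Finset.sum_range_id_mul_two (n + 1)
          have h3 : ((∑ i ∈ Finset.range (n + 1), i : ℕ) : ℝ) * 2 = ((n : ℝ) + 1) * n := by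
            exact_mod_cast congrArg (Nat.cast : ℕ → ℝ) h2
          push_cast at h3 ⊢
          nlinarith [h3]
  -- combine
  have hfinal : ((n : ℝ) + 1) * a ≤ 1 + ((n : ℝ) * (n + 1) / 2) * (a ^ 2 / 2) := by
    calc ((n : ℝ) + 1) * a ≤ _ := hreal
      _ ≤ 1 + ((n : ℝ) * (n + 1) / 2) * (a ^ 2 / 2) := add_le_add hUn hpairsum
  -- arithmetic contradiction
  have ht1 : (2 : ℝ) ≤ (n : ℝ) * a := by
    rw [div_le_iff₀ ha] at hna; linarith
  have ht2 : (n : ℝ) * a < 2 + a := by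
    have := (mul_lt_mul_of_pos_right hna' ha)
    rw [add_mul, div_mul_cancel₀] at this
    · linarith
    · exact ha.ne'
  nlinarith [sq_nonneg ((n : ℝ) * a - 2), mul_pos ha ha,
    mul_nonneg (sub_nonneg.mpr ht1) (sub_nonneg.mpr ht1),
    mul_nonneg (sub_nonneg.mpr ht1) ha.le,
    mul_lt_mul_of_pos_right ht2 ha,
    mul_nonneg (sub_nonneg.mpr ha1) (sub_nonneg.mpr ht1)]
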